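/- For every positive integer d there is a clopen set M ⊆ F(2^{ℤⁿ}) such that: (1) for any distinct x, y ∈ M in the same orbit, ρ(x,y) ≥ d; (2) for every x ∈ F(2^{ℤⁿ}) there is y ∈ M with ρ(x,y) < d. (Basic clopen marker lemma.) -/

import Mathlib

/-- The space `2^{ℤⁿ}` with the product topology. -/
abbrev Space (n : ℕ) : Type := (Fin n → ℤ) → Bool

/-- The Bernoulli shift action: `(g · x)(h) = x(g + h)`. -/
def shift {n : ℕ} (g : Fin n → ℤ) (x : Space n) : Space n := fun h => x (g + h)

/-- The free part `F(2^{ℤⁿ})` of the shift action. -/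
def FreePart (n : ℕ) : Set (Space n) := {x | ∀ g : Fin n → ℤ, g ≠ 0 → shift g x ≠ x}

/-- The sup norm on `ℤⁿ`, valued in `ℕ`. -/
def gnorm {n : ℕ} (g : Fin n → ℤ) : ℕ := Finset.univ.sup fun i => (g i).natAbs

namespace Marker

variable {n : ℕ}

lemma shift_add (g h : Fin n → ℤ) (x : Space n) : shift g (shift h x) = shift (h + g) x := by
  funext k
  simp [shift, add_assoc]

lemma shift_zero (x : Space n) : shift 0 x = x := by
  funext k; simp [shift]

lemma shift_neg_shift (g : Fin n → ℤ) (x : Space n) : shift (-g) (shift g x) = x := by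
  rw [shift_add]
  simp [shift_zero]

lemma freePart_shift {x : Space n} (hx : x ∈ FreePart n) (g : Fin n → ℤ) :
    shift g x ∈ FreePart n := by
  intro h hne heq
  apply hx h hne
  have h2 : shift (g + h) x = shift g x := by rw [← shift_add]; exact heq
  have h3 := congrArg (shift (-g)) h2
  rw [shift_add, shift_add] at h3
  have e1 : (g + h) + -g = h := by abel
  have e2 : g + -g = 0 := by abel
  rw [e1, e2, shift_zero] at h3
  exact h3

lemma natAbs_le_gnorm (g : Fin n → ℤ) (i : Fin n) : (g i).natAbs ≤ gnorm g := by
  unfold gnorm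
  exact Finset.le_sup (f := fun i => (g i).natAbs) (Finset.mem_univ i)

lemma gnorm_neg (g : Fin n → ℤ) : gnorm (-g) = gnorm g := by
  simp [gnorm]

lemma gnorm_zero : gnorm (0 : Fin n → ℤ) = 0 := by simp [gnorm]

/-- The finite set of shifts of sup-norm `< d`. -/
noncomputable def S (n d : ℕ) : Finset (Fin n → ℤ) :=
  (Fintype.piFinset fun _ : Fin n => Finset.Icc (-(d : ℤ)) d).filter fun g => gnorm g < d

lemma mem_S {d : ℕ} {g : Fin n → ℤ} : g ∈ S n d ↔ gnorm g < d := by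
  simp only [S, Finset.mem_filter, Fintype.mem_piFinset, Finset.mem_Icc]
  constructor
  · exact fun h => h.2
  · intro h
    refine ⟨fun i => ?_, h⟩
    have := natAbs_le_gnorm g i
    omega

/-- Convert a box coordinate to `ℤⁿ`. -/
def cv {n N : ℕ} (v : Fin n → Fin (2 * N + 1)) : Fin n → ℤ := fun i => ((v i : ℕ) : ℤ) - N

/-- A pattern on the box `[-N,N]ⁿ` is `d`-aperiodic. -/
def Aper (n d N : ℕ) (p : (Fin n → Fin (2 * N + 1)) → Bool) : Prop :=
  ∀ g : Fin n → ℤ, g ≠ 0 → gnorm g < d →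
    ∃ v w : Fin n → Fin (2 * N + 1),
      (∀ i, ((w i : ℕ) : ℤ) = g i + ((v i : ℕ) : ℤ)) ∧ p v ≠ p w

abbrev Idx (n : ℕ) := Σ N : ℕ, (Fin n → Fin (2 * N + 1)) → Bool

/-- Basic clopen `d`-discrete pieces. -/
def U (n d : ℕ) (i : Idx n) : Set (Space n) :=
  {x | (∀ v, x (cv v) = i.2 v) ∧ Aper n d i.1 i.2}

lemma isClopen_U (d : ℕ) (i : Idx n) : IsClopen (U n d i) := by
  by_cases h : Aper n d i.1 i.2
  · have he : U n d i = ⋂ v, {x : Space n | x (cv v) = i.2 v} := by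
      ext x
      simp [U, h, Set.mem_iInter]
    rw [he]
    exact isClopen_iInter_of_finite fun v =>
      (isClopen_discrete {i.2 v}).preimage (continuous_apply (cv v))
  · have he : U n d i = ∅ := by
      ext x; simp [U, h]
    rw [he]; exact isClopen_empty

lemma U_discrete {d : ℕ} {i : Idx n} {x : Space n} (hx : x ∈ U n d i) {g : Fin n → ℤ}
    (hg : g ≠ 0) (hgd : gnorm g < d) : shift g x ∉ U n d i := by
  intro hy
  obtain ⟨v, w, hw, hp⟩ := hx.2 g hg hgd
  apply hp
  have h1 : x (cv v) = i.2 v := hx.1 v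
  have h2 : x (g + cv v) = i.2 v := hy.1 v
  have h3 : x (cv w) = i.2 w := hx.1 w
  have h4 : g + cv v = cv w := by
    funext j
    have := hw j
    simp only [Pi.add_apply, cv]
    omega
  rw [← h2, h4, h3]

lemma U_cover {d : ℕ} (hd : 1 ≤ d) {x : Space n} (hx : x ∈ FreePart n) :
    ∃ i : Idx n, x ∈ U n d i := by
  classical
  have hwit : ∀ g : Fin n → ℤ, ∃ a, g = 0 ∨ x (g + a) ≠ x a := by
    intro g
    by_cases hg : g = 0
    · exact ⟨0, Or.inl hg⟩
    · have hne := hx g hg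
      rw [Function.ne_iff] at hne
      obtain ⟨a, ha⟩ := hne
      exact ⟨a, Or.inr ha⟩
  choose wit hwitspec using hwit
  set N : ℕ := (S n d).sup (fun g => gnorm (wit g)) + d with hN
  refine ⟨⟨N, fun v => x (cv v)⟩, fun v => rfl, ?_⟩
  show Aper n d N (fun v => x (cv v))
  intro g hg hgd
  have hxa : x (g + wit g) ≠ x (wit g) := (hwitspec g).resolve_left hg
  have hga : gnorm (wit g) + d ≤ N := by
    have h5 : gnorm (wit g) ≤ (S n d).sup (fun g => gnorm (wit g)) :=
      Finset.le_sup (f := fun g => gnorm (wit g)) (mem_S.mpr hgd)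
    omega
  set a := wit g with ha
  refine ⟨fun i => ⟨(a i + N).toNat, by have := natAbs_le_gnorm a i; omega⟩,
         fun i => ⟨(g i + a i + N).toNat, by
            have h1 := natAbs_le_gnorm a i
            have h2 := natAbs_le_gnorm g i
            omega⟩, ?_, ?_⟩
  · intro i
    show ((g i + a i + N).toNat : ℤ) = g i + ((a i + N).toNat : ℤ)
    have h1 := natAbs_le_gnorm a i
    have h2 := natAbs_le_gnorm g i
    omega
  · have hcv : (cv (fun i => (⟨(a i + N).toNat, by have := natAbs_le_gnorm a i; omega⟩ :
        Fin (2 * N + 1)))) = a := by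
      funext i
      show (((a i + N).toNat : ℤ)) - N = a i
      have := natAbs_le_gnorm a i
      omega
    have hcw : (cv (fun i => (⟨(g i + a i + N).toNat, by
        have h1 := natAbs_le_gnorm a i
        have h2 := natAbs_le_gnorm g i
        omega⟩ : Fin (2 * N + 1)))) = g + a := by
      funext i
      show (((g i + a i + N).toNat : ℤ)) - N = (g + a) i
      have h1 := natAbs_le_gnorm a i
      have h2 := natAbs_le_gnorm g i
      simp only [Pi.add_apply]
      omega
    show x _ ≠ x _
    rw [hcv, hcw]
    exact fun h => hxa h.symm

/-- The `d`-neighborhood of a set. -/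
def Near (n d : ℕ) (A : Set (Space n)) : Set (Space n) :=
  ⋃ g ∈ S n d, (fun x => shift g x) ⁻¹' A

lemma mem_Near {d : ℕ} {A : Set (Space n)} {x : Space n} :
    x ∈ Near n d A ↔ ∃ g, gnorm g < d ∧ shift g x ∈ A := by
  simp [Near, mem_S]

lemma Near_mono {d : ℕ} {A B : Set (Space n)} (h : A ⊆ B) : Near n d A ⊆ Near n d B := by
  intro x hx
  rw [mem_Near] at *
  obtain ⟨g, h1, h2⟩ := hx
  exact ⟨g, h1, h h2⟩

lemma isClopen_Near {d : ℕ} {A : Set (Space n)} (hA : IsClopen A) : IsClopen (Near n d A) := by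
  apply isClopen_biUnion_finset
  intro g _
  have hc : Continuous fun x : Space n => shift g x :=
    continuous_pi fun h => continuous_apply (g + h)
  exact hA.preimage hc

/-- The greedy construction. -/
def Mseq (n d : ℕ) (e : ℕ → Idx n) : ℕ → Set (Space n)
  | 0 => ∅
  | k + 1 => Mseq n d e k ∪ (U n d (e k) \ Near n d (Mseq n d e k))

lemma Mseq_mono (d : ℕ) (e : ℕ → Idx n) : Monotone (Mseq n d e) :=
  monotone_nat_of_le_succ fun _ => Set.subset_union_left

lemma isClopen_Mseq (d : ℕ) (e : ℕ → Idx n) (k : ℕ) : IsClopen (Mseq n d e k) := by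
  induction k with
  | zero => exact isClopen_empty
  | succ k ih => exact ih.union ((isClopen_U d (e k)).diff (isClopen_Near ih))

lemma noEscape {d : ℕ} {e : ℕ → Idx n} {k : ℕ} {y : Space n}
    (hy : y ∈ Near n d (Mseq n d e k)) :
    ∀ m, y ∈ Mseq n d e m → y ∈ Mseq n d e k := by
  intro m
  induction m with
  | zero => exact fun h => absurd h (Set.notMem_empty y)
  | succ m ih =>
    intro h
    rcases h with h | h
    · exact ih h
    · rcases le_or_gt k m with hkm | hkm
      · exact absurd (Near_mono (Mseq_mono d e hkm) hy) h.2
      · exact Mseq_mono d e hkm (Or.inr h)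

lemma exists_stage {d : ℕ} {e : ℕ → Idx n} {m : ℕ} {y : Space n} (hy : y ∈ Mseq n d e m) :
    ∃ k, y ∈ U n d (e k) ∧ y ∉ Near n d (Mseq n d e k) ∧
      y ∈ Mseq n d e (k + 1) ∧ y ∉ Mseq n d e k := by
  induction m with
  | zero => exact absurd hy (Set.notMem_empty y)
  | succ m ih =>
    by_cases h : y ∈ Mseq n d e m
    · exact ih h
    · rcases hy with h' | h'
      · exact absurd h' h
      · exact ⟨m, h'.1, h'.2, Or.inr h', h⟩

/-- The total marker set (before intersecting with the free part). -/
def Mtot (n d : ℕ) (e : ℕ → Idx n) : Set (Space n) := ⋃ k, Mseq n d e k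

lemma Mtot_discrete {d : ℕ} {e : ℕ → Idx n} {x : Space n} (hx : x ∈ Mtot n d e)
    {g : Fin n → ℤ} (hg : g ≠ 0) (hgd : gnorm g < d) (hy : shift g x ∈ Mtot n d e) :
    False := by
  obtain ⟨mk, hmk⟩ := Set.mem_iUnion.mp hx
  obtain ⟨k, hkU, hkN, hk1, _⟩ := exists_stage hmk
  obtain ⟨ml, hml⟩ := Set.mem_iUnion.mp hy
  obtain ⟨l, hlU, hlN, hl1, _⟩ := exists_stage hml
  rcases lt_trichotomy k l with hkl | hkl | hkl
  · have hxl : x ∈ Mseq n d e l := Mseq_mono d e hkl hk1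
    exact hlN (mem_Near.mpr ⟨-g, by rw [gnorm_neg]; exact hgd,
      by rw [shift_neg_shift]; exact hxl⟩)
  · subst hkl
    exact U_discrete hkU hg hgd hlU
  · have hyk : shift g x ∈ Mseq n d e k := Mseq_mono d e hkl hl1
    exact hkN (mem_Near.mpr ⟨g, hgd, hyk⟩)

lemma Mtot_cover {d : ℕ} {e : ℕ → Idx n} (hd : 1 ≤ d) (he : Function.Surjective e)
    {x : Space n} (hx : x ∈ FreePart n) :
    ∃ g, gnorm g < d ∧ shift g x ∈ Mtot n d e := by
  obtain ⟨i, hi⟩ := U_cover hd hx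
  obtain ⟨k, rfl⟩ := he i
  by_cases h : x ∈ Mseq n d e (k + 1)
  · exact ⟨0, by rw [gnorm_zero]; omega,
      by rw [shift_zero]; exact Set.mem_iUnion.mpr ⟨k + 1, h⟩⟩
  · have hne : x ∈ Near n d (Mseq n d e k) := by
      by_contra hN
      exact h (Or.inr ⟨hi, hN⟩)
    obtain ⟨g, h1, h2⟩ := mem_Near.mp hne
    exact ⟨g, h1, Set.mem_iUnion.mpr ⟨k, h2⟩⟩

end Marker

theorem stmt19 (n d : ℕ) (hn : 1 ≤ n) (hd : 1 ≤ d) :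
    ∃ M : Set (Space n),
      M ⊆ FreePart n ∧
      IsClopen {x : FreePart n | (x : Space n) ∈ M} ∧
      (∀ x ∈ M, ∀ g : Fin n → ℤ, g ≠ 0 → shift g x ∈ M → d ≤ gnorm g) ∧
      (∀ x ∈ FreePart n, ∃ g : Fin n → ℤ, gnorm g < d ∧ shift g x ∈ M) := by
  classical
  open Marker in
  obtain ⟨e, he⟩ := exists_surjective_nat (Marker.Idx n)
  refine ⟨Marker.Mtot n d e ∩ FreePart n, Set.inter_subset_right, ?_, ?_, ?_⟩
  · -- clopen
    have hset : {x : FreePart n | (x : Space n) ∈ Marker.Mtot n d e ∩ FreePart n} =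
        Subtype.val ⁻¹' Marker.Mtot n d e := by
      ext x
      simp [x.2]
    set W : ℕ → Set (Space n) := fun k =>
      Marker.U n d (e k) \ ⋃ j ∈ Finset.range k, Marker.U n d (e j) with hW
    set Sop : Set (Space n) := ⋃ k, (W k \ Marker.Mseq n d e (k + 1)) with hSop
    have hWclopen : ∀ k, IsClopen (W k) := fun k =>
      (Marker.isClopen_U d (e k)).diff
        (isClopen_biUnion_finset fun j _ => Marker.isClopen_U d (e j))
    have hSopOpen : IsOpen Sop :=
      isOpen_iUnion fun k => ((hWclopen k).diff (Marker.isClopen_Mseq d e (k + 1))).isOpen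
    have hdisj : ∀ y ∈ Sop, y ∉ Marker.Mtot n d e := by
      rintro y hy hmem
      obtain ⟨k, hWk⟩ := Set.mem_iUnion.mp hy
      obtain ⟨m, hm⟩ := Set.mem_iUnion.mp hmem
      obtain ⟨l, hlU, hlN, hl1, hl0⟩ := Marker.exists_stage hm
      rcases lt_trichotomy l k with hlk | hlk | hlk
      · exact hWk.1.2 (Set.mem_biUnion (Finset.mem_range.mpr hlk) hlU)
      · subst hlk
        exact hWk.2 hl1
      · have hyN : y ∈ Marker.Near n d (Marker.Mseq n d e k) := by
          by_contra hN
          exact hWk.2 (Or.inr ⟨hWk.1.1, hN⟩)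
        exact hlN (Marker.Near_mono (Marker.Mseq_mono d e hlk.le) hyN)
    have hcov : ∀ y, y ∈ FreePart n → y ∉ Marker.Mtot n d e → y ∈ Sop := by
      intro y hyF hyM
      have hex : ∃ k, y ∈ Marker.U n d (e k) := by
        obtain ⟨i, hi⟩ := Marker.U_cover hd hyF
        obtain ⟨k, rfl⟩ := he i
        exact ⟨k, hi⟩
      refine Set.mem_iUnion.mpr ⟨Nat.find hex, ⟨⟨Nat.find_spec hex, ?_⟩, ?_⟩⟩
      · intro hc
        obtain ⟨j, hj, hjU⟩ := Set.mem_iUnion₂.mp hc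
        exact Nat.find_min hex (Finset.mem_range.mp hj) hjU
      · exact fun hc => hyM (Set.mem_iUnion.mpr ⟨Nat.find hex + 1, hc⟩)
    rw [hset]
    constructor
    · -- closed
      rw [← isOpen_compl_iff]
      have hcompl : (Subtype.val ⁻¹' Marker.Mtot n d e : Set (FreePart n))ᶜ =
          Subtype.val ⁻¹' Sop := by
        ext x
        simp only [Set.mem_compl_iff, Set.mem_preimage]
        exact ⟨fun h => hcov _ x.2 h, fun h => hdisj _ h⟩
      rw [hcompl]
      exact hSopOpen.preimage continuous_subtype_val
    · exact (isOpen_iUnion fun k => (Marker.isClopen_Mseq d e k).isOpen).preimage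
        continuous_subtype_val
  · intro x hx g hg hmem
    by_contra hlt
    push_neg at hlt
    exact Marker.Mtot_discrete hx.1 hg hlt hmem.1
  · intro x hx
    obtain ⟨g, h1, h2⟩ := Marker.Mtot_cover hd he hx
    exact ⟨g, h1, h2, Marker.freePart_shift hx g⟩
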